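/- Let d, M ≥ 1, let ψ₁, …, ψ_M be vectors in ℂ^d (not necessarily of unit norm) such that the matrix I − Σ_{j=1}^M ψ_j ψ_j† is positive semidefinite, let n₁, …, n_M be natural numbers with N := Σ_j n_j > 0, and set f_j := n_j / N. Then there exists a unit vector φ ∈ ℂ^d with ∏_{j=1}^M |⟨φ, ψ_j⟩|^{2 n_j} = ∏_{j=1}^M f_j^{n_j} if and only if there exists a unit vector φ_s ∈ ℂ^d with |⟨φ_s, ψ_j⟩|² = f_j for all j = 1, …, M. -/

import Mathlib

open scoped BigOperators ComplexOrder

/-- The standard Hermitian inner product on `ℂ^d`, conjugate-linear in the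
first argument: `⟨φ, ψ⟩ = ∑ i, conj (φ i) * ψ i`. -/
noncomputable def inp {d : ℕ} (φ ψ : Fin d → ℂ) : ℂ :=
  ∑ i, (starRingEnd ℂ) (φ i) * ψ i

lemma sum_abs_sq_le {d M : ℕ} (ψ : Fin M → (Fin d → ℂ))
    (h : Matrix.PosSemidef
      ((1 : Matrix (Fin d) (Fin d) ℂ) - ∑ j, Matrix.vecMulVec (ψ j) (star (ψ j))))
    (φ : Fin d → ℂ) (hφ : inp φ φ = 1) :
    ∑ j, ‖inp φ (ψ j)‖ ^ 2 ≤ 1 := by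
  have h2 := h.dotProduct_mulVec_nonneg φ
  have key : dotProduct (star φ) (((1 : Matrix (Fin d) (Fin d) ℂ)
      - ∑ j, Matrix.vecMulVec (ψ j) (star (ψ j))).mulVec φ)
      = ((1 - ∑ j, ‖inp φ (ψ j)‖ ^ 2 : ℝ) : ℂ) := by
    rw [Matrix.sub_mulVec, dotProduct_sub, Matrix.one_mulVec]
    have e1 : dotProduct (star φ) φ = (1 : ℂ) := by
      rw [← hφ]; simp [dotProduct, inp]
    have e2 : ∀ j, dotProduct (star φ) ((Matrix.vecMulVec (ψ j) (star (ψ j))).mulVec φ)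
        = ((‖inp φ (ψ j)‖ ^ 2 : ℝ) : ℂ) := by
      intro j
      have : dotProduct (star φ) ((Matrix.vecMulVec (ψ j) (star (ψ j))).mulVec φ)
          = inp φ (ψ j) * (starRingEnd ℂ) (inp φ (ψ j)) := by
        simp only [dotProduct, Matrix.mulVec, Matrix.vecMulVec, inp,
          Pi.star_apply, Matrix.of_apply, map_sum, map_mul]
        rw [Finset.sum_mul_sum]
        simp only [Finset.mul_sum]
        apply Finset.sum_congr rfl; intro i _
        apply Finset.sum_congr rfl; intro k _
        simp only [RCLike.star_def, Complex.conj_conj]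
        ring
      rw [this, Complex.mul_conj, ← Complex.sq_norm]
    have e3 : dotProduct (star φ)
        ((∑ j, Matrix.vecMulVec (ψ j) (star (ψ j))).mulVec φ)
        = ∑ j, dotProduct (star φ) ((Matrix.vecMulVec (ψ j) (star (ψ j))).mulVec φ) := by
      simp only [dotProduct, Matrix.mulVec, Matrix.sum_apply, Finset.sum_mul,
        Finset.mul_sum]
      exact Finset.sum_comm.trans ((Finset.sum_congr rfl fun x _ => Finset.sum_comm).trans
        (Finset.sum_comm.trans (Finset.sum_congr rfl fun j _ => Finset.sum_comm)))
    rw [e1, e3, Finset.sum_congr rfl (fun j _ => e2 j)]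
    push_cast
    ring
  rw [key] at h2
  have : (0:ℝ) ≤ 1 - ∑ j, ‖inp φ (ψ j)‖ ^ 2 := by
    exact_mod_cast h2
  linarith

lemma amgm_eq {M : ℕ} (n : Fin M → ℕ) (N : ℕ) (hN : N = ∑ j, n j) (hNpos : 0 < N)
    (f p : Fin M → ℝ) (hf : ∀ j, f j = (n j : ℝ) / N) (hp0 : ∀ j, 0 ≤ p j)
    (hsum : ∑ j, p j ≤ 1)
    (hprod : ∏ j, p j ^ n j = ∏ j, f j ^ n j) :
    ∀ j, p j = f j := by
  have hNR : (0:ℝ) < N := by exact_mod_cast hNpos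
  have hfpos : ∀ j, 0 < n j → 0 < f j := by
    intro j hj; rw [hf j]; positivity
  have hf0 : ∀ j, n j = 0 → f j = 0 := by
    intro j hj; rw [hf j, hj]; simp
  have hfprodpos : 0 < ∏ j, f j ^ n j := by
    apply Finset.prod_pos; intro j _
    rcases Nat.eq_zero_or_pos (n j) with h0 | h0
    · simp [h0]
    · exact pow_pos (hfpos j h0) _
  have hppos : ∀ j, 0 < n j → 0 < p j := by
    intro j hj
    rcases (hp0 j).lt_or_eq with h | h
    · exact h
    · exfalso
      have : ∏ j, p j ^ n j = 0 :=
        Finset.prod_eq_zero (Finset.mem_univ j) (by rw [← h, zero_pow hj.ne'])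
      rw [hprod] at this; exact hfprodpos.ne' this
  -- ratio positivity
  have hrpos : ∀ j, 0 < n j → 0 < p j / f j := fun j hj => div_pos (hppos j hj) (hfpos j hj)
  set g : Fin M → ℝ := fun j => (n j : ℝ) * Real.log (p j / f j) with hg
  set h : Fin M → ℝ := fun j => (n j : ℝ) * (p j / f j - 1) with hh
  have hgh : ∀ j ∈ Finset.univ, g j ≤ h j := by
    intro j _
    rcases Nat.eq_zero_or_pos (n j) with h0 | h0
    · simp [hg, hh, h0]
    · exact mul_le_mul_of_nonneg_left (Real.log_le_sub_one_of_pos (hrpos j h0))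
        (Nat.cast_nonneg _)
  have hprodr : ∏ j, (p j / f j) ^ n j = 1 := by
    have : ∏ j, (p j / f j) ^ n j = (∏ j, p j ^ n j) / (∏ j, f j ^ n j) := by
      rw [← Finset.prod_div_distrib]
      exact Finset.prod_congr rfl fun j _ => div_pow _ _ _
    rw [this, hprod, div_self hfprodpos.ne']
  have hsumg : ∑ j, g j = 0 := by
    have hne : ∀ j ∈ (Finset.univ : Finset (Fin M)), (p j / f j) ^ n j ≠ 0 := by
      intro j _
      rcases Nat.eq_zero_or_pos (n j) with h0 | h0
      · simp [h0]
      · exact (pow_pos (hrpos j h0) _).ne'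
    have e : ∑ j, g j = ∑ i, Real.log ((p i / f i) ^ n i) :=
      Finset.sum_congr rfl fun j _ => (Real.log_pow _ _).symm
    rw [e, ← Real.log_prod hne, hprodr, Real.log_one]
  -- c j = the linearized term
  have hhval : ∀ j, h j = (if 0 < n j then (N:ℝ) * p j else 0) - (n j : ℝ) := by
    intro j
    rcases Nat.eq_zero_or_pos (n j) with h0 | h0
    · simp [hh, h0]
    · rw [if_pos h0]
      have hfne : f j ≠ 0 := (hfpos j h0).ne'
      simp only [hh]
      rw [hf j]
      have hNne : (N:ℝ) ≠ 0 := hNR.ne'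
      field_simp
  have hsumh_le : ∑ j, h j ≤ 0 := by
    have : ∑ j, h j = (∑ j, (if 0 < n j then (N:ℝ) * p j else 0)) - N := by
      rw [Finset.sum_congr rfl fun j _ => hhval j, Finset.sum_sub_distrib]
      congr 1
      rw [← Nat.cast_sum, ← hN]
    rw [this, sub_nonpos]
    calc (∑ j, (if 0 < n j then (N:ℝ) * p j else 0)) ≤ ∑ j, (N:ℝ) * p j := by
          apply Finset.sum_le_sum; intro j _
          split
          · exact le_refl _
          · exact mul_nonneg hNR.le (hp0 j)
      _ = N * ∑ j, p j := by rw [Finset.mul_sum]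
      _ ≤ N * 1 := by exact mul_le_mul_of_nonneg_left hsum hNR.le
      _ = N := mul_one _
  have hsum_eq : ∑ j, g j = ∑ j, h j := by
    have h1 : ∑ j, g j ≤ ∑ j, h j := Finset.sum_le_sum hgh
    linarith [hsumg, hsumh_le, h1]
  have heach : ∀ j ∈ Finset.univ, g j = h j :=
    (Finset.sum_eq_sum_iff_of_le hgh).1 hsum_eq
  -- for n j > 0 : p j = f j
  have hpf : ∀ j, 0 < n j → p j = f j := by
    intro j hj
    have := heach j (Finset.mem_univ j)
    simp only [hg, hh] at this
    have hne : ((n j : ℝ)) ≠ 0 := by exact_mod_cast hj.ne'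
    have hlog : Real.log (p j / f j) = p j / f j - 1 := mul_left_cancel₀ hne this
    by_contra hne2
    have hr1 : p j / f j ≠ 1 := by
      intro hcon
      exact hne2 ((div_eq_one_iff_eq (hfpos j hj).ne').1 hcon)
    exact absurd hlog (Real.log_lt_sub_one_of_pos (hrpos j hj) hr1).ne
  -- sum over positive n j equals 1, forcing others to be 0
  have hsumh0 : ∑ j, h j = 0 := by rw [← hsum_eq, hsumg]
  have hc_eq : ∑ j, (if 0 < n j then (N:ℝ) * p j else 0) = N := by
    have : ∑ j, h j = (∑ j, (if 0 < n j then (N:ℝ) * p j else 0)) - N := by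
      rw [Finset.sum_congr rfl fun j _ => hhval j, Finset.sum_sub_distrib]
      congr 1
      rw [← Nat.cast_sum, ← hN]
    rw [hsumh0] at this
    linarith
  have hc_le : ∀ j ∈ Finset.univ, (if 0 < n j then (N:ℝ) * p j else 0) ≤ (N:ℝ) * p j := by
    intro j _
    split
    · exact le_refl _
    · exact mul_nonneg hNR.le (hp0 j)
  have hsum1 : ∑ j, (N:ℝ) * p j ≤ N := by
    rw [← Finset.mul_sum]
    calc (N:ℝ) * ∑ j, p j ≤ N * 1 := mul_le_mul_of_nonneg_left hsum hNR.le
      _ = N := mul_one _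
  have hceq : ∀ j ∈ Finset.univ, (if 0 < n j then (N:ℝ) * p j else 0) = (N:ℝ) * p j := by
    apply (Finset.sum_eq_sum_iff_of_le hc_le).1
    have h1 : ∑ j, (if 0 < n j then (N:ℝ) * p j else 0) ≤ ∑ j, (N:ℝ) * p j :=
      Finset.sum_le_sum hc_le
    linarith [hc_eq, hsum1]
  intro j
  rcases Nat.eq_zero_or_pos (n j) with h0 | h0
  · have := hceq j (Finset.mem_univ j)
    rw [if_neg (by omega)] at this
    have hpj : p j = 0 := by
      rcases mul_eq_zero.1 this.symm with h | h
      · exact absurd h hNR.ne'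
      · exact h
    rw [hpj, hf0 j h0]
  · exact hpf j h0

theorem stmt2 (d M : ℕ) (hd : 1 ≤ d) (hM : 1 ≤ M)
    (ψ : Fin M → (Fin d → ℂ))
    (hPOVM : Matrix.PosSemidef
      ((1 : Matrix (Fin d) (Fin d) ℂ) - ∑ j, Matrix.vecMulVec (ψ j) (star (ψ j))))
    (n : Fin M → ℕ) (N : ℕ) (hN : N = ∑ j, n j) (hNpos : 0 < N)
    (f : Fin M → ℝ) (hf : ∀ j, f j = (n j : ℝ) / N) :
    (∃ φ : Fin d → ℂ, inp φ φ = 1 ∧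
        ∏ j, ‖inp φ (ψ j)‖ ^ (2 * n j) = ∏ j, (f j) ^ (n j)) ↔
      (∃ φs : Fin d → ℂ, inp φs φs = 1 ∧
        ∀ j, ‖inp φs (ψ j)‖ ^ 2 = f j) := by
  constructor
  · rintro ⟨φ, hφ1, hφ2⟩
    refine ⟨φ, hφ1, ?_⟩
    have hsum := sum_abs_sq_le ψ hPOVM φ hφ1
    have hprod : ∏ j, (‖inp φ (ψ j)‖ ^ 2) ^ n j = ∏ j, f j ^ n j := by
      rw [← hφ2]
      exact Finset.prod_congr rfl fun j _ => by rw [← pow_mul]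
    exact amgm_eq n N hN hNpos f _ hf (fun j => sq_nonneg _) hsum hprod
  · rintro ⟨φs, h1, h2⟩
    refine ⟨φs, h1, ?_⟩
    apply Finset.prod_congr rfl
    intro j _
    rw [pow_mul, h2 j]
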